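/- Let F(θ,r,z) and G(θ,r,z) be trigonometric polynomial perturbations as in the discontinuous system, with f₁(r,z) = ∫₀^π F₁(θ,r,z) dθ + ∫_π^{2π} G₁(θ,r,z) dθ. Then f₁(r,z) = Σ_{i odd} r^{i+j} z^k (a_{ijk} + (-1)^j α_{ijk}) I_{(i+1,j)} + Σ_{i even} r^{i+j} z^k (b_{ijk} - (-1)^j β_{ijk}) I_{(i,j+1)}, where I_{(p,q)} = ∫₀^π cos^p θ sin^q θ dθ. -/
import Mathlib


open Real

/-- I_{(p,q)} = ∫₀^π cos^p θ sin^q θ dθ. -/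
noncomputable def Ipq (p q : ℕ) : ℝ :=
  ∫ θ in (0:ℝ)..π, Real.cos θ ^ p * Real.sin θ ^ q

/-- The index set of triples (i, j, k) with i + j + |k| ≤ n. -/
def idx (n d : ℕ) : Finset (ℕ × ℕ × (Fin d → ℕ)) :=
  ((Finset.range (n + 1)) ×ˢ (Finset.range (n + 1)) ×ˢ
      (Fintype.piFinset fun _ : Fin d => Finset.range (n + 1))).filter
    (fun x => x.1 + x.2.1 + ∑ l, x.2.2 l ≤ n)

lemma Ipq_odd (p q : ℕ) (hp : Odd p) : Ipq p q = 0 := by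
  have h : Ipq p q = ∫ θ in (0:ℝ)..π, Real.cos (π - θ) ^ p * Real.sin (π - θ) ^ q := by
    rw [intervalIntegral.integral_comp_sub_left
      (fun θ => Real.cos θ ^ p * Real.sin θ ^ q) π]
    simp [Ipq]
  have h2 : Ipq p q = -Ipq p q := by
    nth_rewrite 1 [h]
    simp only [Real.cos_pi_sub, Real.sin_pi_sub, Ipq]
    rw [← intervalIntegral.integral_neg]
    congr 1; ext θ
    rw [Odd.neg_pow hp]; ring
  linarith

lemma shift_pi (p q : ℕ) :
    (∫ θ in π..(2*π), Real.cos θ ^ p * Real.sin θ ^ q)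
      = (-1:ℝ)^(p+q) * Ipq p q := by
  have h := intervalIntegral.integral_comp_add_right (a := (0:ℝ)) (b := π)
    (fun θ => Real.cos θ ^ p * Real.sin θ ^ q) π
  simp only [zero_add] at h
  rw [(by ring : (2*π) = π + π), ← h]
  simp only [Real.cos_add_pi, Real.sin_add_pi]
  rw [Ipq, ← intervalIntegral.integral_const_mul]
  congr 1; ext θ
  rw [neg_pow, neg_pow]; ring

lemma term_int (c A B : ℝ) (p q : ℕ) (u v : ℝ) :
    (∫ θ in u..v, c * (A * Real.cos θ ^ (p+1) * Real.sin θ ^ q +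
        B * Real.cos θ ^ p * Real.sin θ ^ (q+1)))
    = c * A * (∫ θ in u..v, Real.cos θ ^ (p+1) * Real.sin θ ^ q)
      + c * B * (∫ θ in u..v, Real.cos θ ^ p * Real.sin θ ^ (q+1)) := by
  have h : (fun θ => c * (A * Real.cos θ ^ (p+1) * Real.sin θ ^ q +
      B * Real.cos θ ^ p * Real.sin θ ^ (q+1)))
      = fun θ => (c*A) * (Real.cos θ ^ (p+1) * Real.sin θ ^ q)
        + (c*B) * (Real.cos θ ^ p * Real.sin θ ^ (q+1)) := by
    ext θ; ring
  rw [h, intervalIntegral.integral_add, intervalIntegral.integral_const_mul,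
    intervalIntegral.integral_const_mul]
  · exact (Continuous.intervalIntegrable (by fun_prop) u v)
  · exact (Continuous.intervalIntegrable (by fun_prop) u v)

lemma Ipq_def' (p q : ℕ) :
    (∫ θ in (0:ℝ)..π, Real.cos θ ^ p * Real.sin θ ^ q) = Ipq p q := rfl

theorem averaged_function_f1_discontinuous (n d : ℕ)
    (a b α β : ℕ × ℕ × (Fin d → ℕ) → ℝ) (r : ℝ) (hr : 0 < r) (z : Fin d → ℝ) :
    (∫ θ in (0:ℝ)..π, ∑ x ∈ idx n d,
        r ^ (x.1 + x.2.1) * (∏ l, z l ^ x.2.2 l) *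
          (a x * Real.cos θ ^ (x.1 + 1) * Real.sin θ ^ x.2.1 +
           b x * Real.cos θ ^ x.1 * Real.sin θ ^ (x.2.1 + 1)))
    + (∫ θ in π..(2 * π), ∑ x ∈ idx n d,
        r ^ (x.1 + x.2.1) * (∏ l, z l ^ x.2.2 l) *
          (α x * Real.cos θ ^ (x.1 + 1) * Real.sin θ ^ x.2.1 +
           β x * Real.cos θ ^ x.1 * Real.sin θ ^ (x.2.1 + 1)))
    = (∑ x ∈ (idx n d).filter (fun x => Odd x.1),
         r ^ (x.1 + x.2.1) * (∏ l, z l ^ x.2.2 l) *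
           (a x + (-1 : ℝ) ^ x.2.1 * α x) * Ipq (x.1 + 1) x.2.1)
    + (∑ x ∈ (idx n d).filter (fun x => Even x.1),
         r ^ (x.1 + x.2.1) * (∏ l, z l ^ x.2.2 l) *
           (b x - (-1 : ℝ) ^ x.2.1 * β x) * Ipq x.1 (x.2.1 + 1)) := by
  rw [intervalIntegral.integral_finset_sum, intervalIntegral.integral_finset_sum]
  · simp only [term_int, shift_pi, Ipq_def']
    rw [Finset.sum_filter, Finset.sum_filter, ← Finset.sum_add_distrib,
      ← Finset.sum_add_distrib]
    refine Finset.sum_congr rfl fun x _ => ?_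
    set c := r ^ (x.1 + x.2.1) * (∏ l, z l ^ x.2.2 l) with hc
    rcases Nat.even_or_odd x.1 with he | ho
    · have h1 : Ipq (x.1 + 1) x.2.1 = 0 := Ipq_odd _ _ (Even.add_one he)
      have h2 : (-1:ℝ) ^ (x.1 + (x.2.1 + 1)) = -(-1:ℝ) ^ x.2.1 := by
        rw [← add_assoc, pow_add, pow_add, he.neg_one_pow]; ring
      rw [if_neg (Nat.not_odd_iff_even.2 he), if_pos he, h1, h2]
      ring
    · have h2 : Ipq x.1 (x.2.1 + 1) = 0 := Ipq_odd _ _ ho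
      have h1 : (-1:ℝ) ^ (x.1 + 1 + x.2.1) = (-1:ℝ) ^ x.2.1 := by
        rw [pow_add, pow_add, ho.neg_one_pow]; ring
      rw [if_pos ho, if_neg (Nat.not_even_iff_odd.2 ho), h1, h2]
      ring
  · exact fun x _ => (Continuous.intervalIntegrable (by fun_prop) _ _)
  · exact fun x _ => (Continuous.intervalIntegrable (by fun_prop) _ _)
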